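/- Let m ≥ 1, d₀ ≥ 1, and ξ(y) = η(y) ln^m(1 + η(y)²/(2d₀)²) with η(y) = (y + (y²+(2d₀)²)^{1/2})/2. If x' < 0, then for any ω ∈ (0, 2d₀), Re(−i x' ξ(y + iω)) → −∞ as y → +∞ along the reals; if x' > 0 the same holds for any ω ∈ (−2d₀, 0). Moreover, the leading asymptotics is Re(−i x' ξ(y+iω)) ~ x' ω (2 ln y)^m. -/

import Mathlib

open Complex Filter Set

noncomputable def eta3 (d₀ : ℝ) (y : ℂ) : ℂ :=
  (y + (y ^ 2 + ((2 * d₀ : ℝ) : ℂ) ^ 2) ^ ((1 : ℂ) / 2)) / 2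

noncomputable def xi3 (d₀ m : ℝ) (y : ℂ) : ℂ :=
  eta3 d₀ y * (Complex.log (1 + (eta3 d₀ y) ^ 2 / ((2 * d₀ : ℝ) : ℂ) ^ 2)) ^ (m : ℂ)

/-- `|arg z| ≤ (π/2) * (|z.im| / z.re)` when `0 < z.re`. -/
lemma aux_arg_le {z : ℂ} (hz : 0 < z.re) : |Complex.arg z| ≤ Real.pi / 2 * (|z.im| / z.re) := by
  have hzne : z ≠ 0 := by intro h; rw [h] at hz; simp at hz
  have habs : 0 < ‖z‖ := norm_pos_iff.mpr hzne
  have hre : z.re ≤ ‖z‖ := Complex.re_le_norm z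
  have h1 : |Complex.arg z| < Real.pi / 2 :=
    Complex.abs_arg_lt_pi_div_two_iff.2 (Or.inl hz)
  have h2 := Real.mul_abs_le_abs_sin (x := Complex.arg z) h1.le
  rw [Complex.sin_arg, abs_div, abs_of_pos habs] at h2
  have hπ : 0 < Real.pi := Real.pi_pos
  have key : Real.pi / 2 * (2 / Real.pi * |Complex.arg z|) = |Complex.arg z| := by
    field_simp
  have h3 : |z.im| / ‖z‖ ≤ |z.im| / z.re := by
    gcongr
  calc |Complex.arg z| = Real.pi / 2 * (2 / Real.pi * |Complex.arg z|) := key.symm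
    _ ≤ Real.pi / 2 * (|z.im| / ‖z‖) := by
        apply mul_le_mul_of_nonneg_left h2 (by positivity)
    _ ≤ Real.pi / 2 * (|z.im| / z.re) := by
        apply mul_le_mul_of_nonneg_left h3 (by positivity)

noncomputable def wC (ω y : ℝ) : ℂ := (y : ℂ) + Complex.I * (ω : ℂ)

noncomputable def eC (c ω : ℝ) (y : ℝ) : ℂ :=
  (((wC ω y) ^ 2 + (c : ℂ) ^ 2) ^ ((1 : ℂ) / 2) - wC ω y) / 2

lemma wC_re (ω y : ℝ) : (wC ω y).re = y := by simp [wC]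
lemma wC_im (ω y : ℝ) : (wC ω y).im = ω := by simp [wC]

lemma AC_re (c ω y : ℝ) : ((wC ω y) ^ 2 + (c : ℂ) ^ 2).re = y ^ 2 - ω ^ 2 + c ^ 2 := by
  simp [wC, sq, Complex.add_re, Complex.mul_re, Complex.add_im, Complex.mul_im]

lemma AC_pos {c ω : ℝ} (hω : |ω| < c) (y : ℝ) : 0 < ((wC ω y) ^ 2 + (c : ℂ) ^ 2).re := by
  rw [AC_re]
  have h1 : ω ^ 2 < c ^ 2 := sq_lt_sq' (neg_lt_of_abs_lt hω) (lt_of_abs_lt hω)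
  nlinarith [sq_nonneg y]

lemma AC_ne {c ω : ℝ} (hω : |ω| < c) (y : ℝ) : (wC ω y) ^ 2 + (c : ℂ) ^ 2 ≠ 0 := by
  intro h
  have := AC_pos hω y
  rw [h] at this; simp at this

lemma SC_sq {c ω : ℝ} (hω : |ω| < c) (y : ℝ) :
    ((((wC ω y) ^ 2 + (c : ℂ) ^ 2) ^ ((1 : ℂ) / 2)) ^ 2) = (wC ω y) ^ 2 + (c : ℂ) ^ 2 := by
  rw [sq, ← Complex.cpow_add _ _ (AC_ne hω y)]
  norm_num

lemma SC_re_nonneg {c ω : ℝ} (hω : |ω| < c) (y : ℝ) :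
    0 ≤ ((((wC ω y) ^ 2 + (c : ℂ) ^ 2) ^ ((1 : ℂ) / 2))).re := by
  rw [Complex.cpow_def_of_ne_zero (AC_ne hω y), Complex.exp_re]
  apply mul_nonneg (Real.exp_nonneg _)
  apply Real.cos_nonneg_of_mem_Icc
  have h12 : ((1 : ℂ) / 2) = ((1 / 2 : ℝ) : ℂ) := by norm_num
  rw [h12]
  simp only [Complex.mul_im, Complex.ofReal_re, Complex.ofReal_im, Complex.log_im, mul_zero,
    add_zero, zero_mul]
  constructor
  · have := Complex.neg_pi_lt_arg ((wC ω y) ^ 2 + (c : ℂ) ^ 2)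
    linarith
  · have := Complex.arg_le_pi ((wC ω y) ^ 2 + (c : ℂ) ^ 2)
    linarith

lemma eC_eq {c ω : ℝ} (hω : |ω| < c) {y : ℝ} (hy : 0 < y) :
    eC c ω y = (c : ℂ) ^ 2 / (2 * ((((wC ω y) ^ 2 + (c : ℂ) ^ 2) ^ ((1 : ℂ) / 2)) + wC ω y)) := by
  have hne : (((wC ω y) ^ 2 + (c : ℂ) ^ 2) ^ ((1 : ℂ) / 2)) + wC ω y ≠ 0 := by
    intro h
    have h2 : ((((wC ω y) ^ 2 + (c : ℂ) ^ 2) ^ ((1 : ℂ) / 2)) + wC ω y).re = 0 := by rw [h]; simp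
    rw [Complex.add_re, wC_re] at h2
    have := SC_re_nonneg hω y
    linarith
  have hsq := SC_sq hω y
  rw [eC, div_eq_div_iff (by norm_num) (by simpa using hne)]
  generalize hS : ((wC ω y) ^ 2 + (c : ℂ) ^ 2) ^ ((1 : ℂ) / 2) = S at hsq ⊢
  linear_combination 2 * hsq

lemma eC_norm_le {c ω : ℝ} (hc : 0 < c) (hω : |ω| < c) {y : ℝ} (hy : 0 < y) :
    ‖eC c ω y‖ ≤ c ^ 2 / (2 * y) := by
  rw [eC_eq hω hy]
  have h1 : ‖(c : ℂ) ^ 2‖ = c ^ 2 := by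
    rw [norm_pow, Complex.norm_real, Real.norm_eq_abs, abs_of_pos hc]
  have h2 : (2 : ℝ) * y ≤ ‖(2 : ℂ) * ((((wC ω y) ^ 2 + (c : ℂ) ^ 2) ^ ((1 : ℂ) / 2)) + wC ω y)‖ := by
    have hre : (2 : ℝ) * y ≤ ((2 : ℂ) * ((((wC ω y) ^ 2 + (c : ℂ) ^ 2) ^ ((1 : ℂ) / 2)) + wC ω y)).re := by
      have h3 : ((2 : ℂ) * ((((wC ω y) ^ 2 + (c : ℂ) ^ 2) ^ ((1 : ℂ) / 2)) + wC ω y)).re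
          = 2 * (((((wC ω y) ^ 2 + (c : ℂ) ^ 2) ^ ((1 : ℂ) / 2))).re + y) := by
        simp [Complex.mul_re, Complex.add_re, wC_re]
      rw [h3]
      have := SC_re_nonneg hω y
      linarith
    calc (2:ℝ) * y ≤ _ := hre
      _ ≤ _ := Complex.re_le_norm _
  rw [norm_div, h1]
  apply div_le_div_of_nonneg_left (by positivity) (by positivity) h2

lemma eC_tendsto {c ω : ℝ} (hc : 0 < c) (hω : |ω| < c) :
    Tendsto (eC c ω) atTop (nhds 0) := by
  apply squeeze_zero_norm' (a := fun y => c ^ 2 / (2 * y))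
  · filter_upwards [eventually_gt_atTop 0] with y hy using eC_norm_le hc hω hy
  · exact tendsto_const_nhds.div_atTop
      (Tendsto.const_mul_atTop two_pos tendsto_id)

set_option maxHeartbeats 1000000 in
/-- If x' < 0 and ω ∈ (0, 2d₀) (resp. x' > 0 and ω ∈ (−2d₀, 0)), then
Re(−i x' ξ(y + iω)) → −∞ as y → +∞ along ℝ, with leading asymptotics
Re(−i x' ξ(y+iω)) ~ x' ω (2 ln y)^m. -/
theorem stmt_3 (d₀ m x' ω : ℝ) (hd₀ : 1 ≤ d₀) (hm : 1 ≤ m)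
    (hsign : (x' < 0 ∧ ω ∈ Set.Ioo (0 : ℝ) (2 * d₀)) ∨
             (0 < x' ∧ ω ∈ Set.Ioo (-(2 * d₀)) (0 : ℝ))) :
    Tendsto (fun y : ℝ =>
        (-Complex.I * (x' : ℂ) * xi3 d₀ m ((y : ℂ) + Complex.I * (ω : ℂ))).re)
      atTop atBot ∧
    Tendsto (fun y : ℝ =>
        (-Complex.I * (x' : ℂ) * xi3 d₀ m ((y : ℂ) + Complex.I * (ω : ℂ))).re /
          (x' * ω * (2 * Real.log y) ^ m))
      atTop (nhds 1) := by
  have hc : (0:ℝ) < 2 * d₀ := by linarith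
  have hω : |ω| < 2 * d₀ := by
    rcases hsign with ⟨_, h1, h2⟩ | ⟨_, h1, h2⟩
    · rw [abs_of_pos h1]; exact h2
    · rw [abs_of_neg h2]; linarith
  have hωne : ω ≠ 0 := by
    rcases hsign with ⟨_, h1, _⟩ | ⟨_, _, h2⟩
    · exact ne_of_gt h1
    · exact ne_of_lt h2
  have hxω : x' * ω < 0 := by
    rcases hsign with ⟨h0, h1, _⟩ | ⟨h0, _, h2⟩
    · exact mul_neg_of_neg_of_pos h0 h1
    · exact mul_neg_of_pos_of_neg h0 h2
  have hx'ne : x' ≠ 0 := by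
    rcases hsign with ⟨h0, _, _⟩ | ⟨h0, _, _⟩
    · exact ne_of_lt h0
    · exact ne_of_gt h0
  have hmpos : (0:ℝ) < m := lt_of_lt_of_le one_pos hm
  set e : ℝ → ℂ := eC (2*d₀) ω with he_def
  set u : ℝ → ℝ := fun y => y + (e y).re with hu_def
  set v : ℝ → ℝ := fun y => ω + (e y).im with hv_def
  set B : ℝ → ℂ := fun y => 1 + (wC ω y + e y) ^ 2 / ((2 * d₀ : ℝ) : ℂ) ^ 2 with hB_def
  set L : ℝ → ℂ := fun y => Complex.log (B y) with hL_def
  set P : ℝ → ℝ := fun y => (B y).re with hP_def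
  set Q : ℝ → ℝ := fun y => (B y).im with hQ_def
  set k : ℝ := (2*d₀)^2 with hk_def
  have hk : 0 < k := by positivity
  -- rewriting xi3
  have heta : ∀ y : ℝ, eta3 d₀ ((y : ℂ) + Complex.I * (ω : ℂ)) = wC ω y + e y := by
    intro y
    simp only [he_def, eta3, eC, wC]
    ring
  have hxi : ∀ y : ℝ, xi3 d₀ m ((y : ℂ) + Complex.I * (ω : ℂ))
      = (wC ω y + e y) * (L y) ^ (m : ℂ) := by
    intro y
    rw [xi3, heta y]
  have hwre : ∀ y : ℝ, (wC ω y + e y).re = u y := by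
    intro y; simp [wC, hu_def]
  have hwim : ∀ y : ℝ, (wC ω y + e y).im = v y := by
    intro y; simp [wC, hv_def]
  -- basic limits
  have he0 : Tendsto e atTop (nhds 0) := eC_tendsto hc hω
  have heRe : Tendsto (fun y => (e y).re) atTop (nhds 0) := by
    simpa [Function.comp_def] using (Complex.continuous_re.tendsto 0).comp he0
  have heIm : Tendsto (fun y => (e y).im) atTop (nhds 0) := by
    simpa [Function.comp_def] using (Complex.continuous_im.tendsto 0).comp he0
  have hinv : Tendsto (fun y : ℝ => y⁻¹) atTop (nhds 0) := tendsto_inv_atTop_zero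
  have ha : Tendsto (fun y => u y * y⁻¹) atTop (nhds 1) := by
    have h1 : Tendsto (fun y : ℝ => 1 + (e y).re * y⁻¹) atTop (nhds 1) := by
      simpa using tendsto_const_nhds.add (heRe.mul hinv)
    apply h1.congr'
    filter_upwards [eventually_gt_atTop 0] with y hy
    simp only [hu_def]
    field_simp
  have hb : Tendsto v atTop (nhds ω) := by
    simpa using tendsto_const_nhds.add heIm
  -- P and Q formulas
  have hPform : ∀ y : ℝ, P y = 1 + (u y ^ 2 - v y ^ 2) / k := by
    intro y
    have hcast : ((2 * d₀ : ℝ) : ℂ) ^ 2 = ((k : ℝ) : ℂ) := by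
      rw [hk_def]; push_cast; ring
    simp only [hP_def, hB_def, hcast, Complex.add_re, Complex.one_re, Complex.div_ofReal_re,
      sq, Complex.mul_re, hwre, hwim]
  have hQform : ∀ y : ℝ, Q y = 2 * u y * v y / k := by
    intro y
    have hcast : ((2 * d₀ : ℝ) : ℂ) ^ 2 = ((k : ℝ) : ℂ) := by
      rw [hk_def]; push_cast; ring
    simp only [hQ_def, hB_def, hcast, Complex.add_im, Complex.one_im, Complex.div_ofReal_im,
      sq, Complex.mul_im, hwre, hwim]
    ring
  have hP2 : Tendsto (fun y => P y * (y ^ 2)⁻¹) atTop (nhds k⁻¹) := by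
    have h1 : Tendsto (fun y : ℝ => y⁻¹ * y⁻¹ + (u y * y⁻¹ * (u y * y⁻¹) - v y * y⁻¹ * (v y * y⁻¹)) / k)
        atTop (nhds k⁻¹) := by
      have := (hinv.mul hinv).add
        ((((ha.mul ha).sub ((hb.mul hinv).mul (hb.mul hinv))).div_const k))
      simpa using this
    apply h1.congr'
    filter_upwards [eventually_gt_atTop 0] with y hy
    rw [hPform y]
    field_simp
  have hQ1 : Tendsto (fun y => Q y * y⁻¹) atTop (nhds (2 * ω / k)) := by
    have h1 : Tendsto (fun y : ℝ => 2 * (u y * y⁻¹) * v y / k) atTop (nhds (2 * ω / k)) := by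
      have := (((ha.const_mul 2).mul hb).div_const k)
      simpa [mul_comm] using this
    apply h1.congr'
    filter_upwards [eventually_gt_atTop 0] with y hy
    rw [hQform y]
    ring
  have hPpos : ∀ᶠ y in atTop, 0 < P y := by
    have h1 : ∀ᶠ y in atTop, (2*k)⁻¹ < P y * (y ^ 2)⁻¹ := by
      apply hP2.eventually (eventually_gt_nhds ?_)
      rw [inv_lt_inv₀ (by positivity) (by positivity)]
      linarith
    filter_upwards [h1, eventually_gt_atTop 0] with y h2 hy
    have hy2 : (0:ℝ) < y ^ 2 := by positivity
    have h3 := mul_lt_mul_of_pos_right h2 hy2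
    have h4 : P y * (y ^ 2)⁻¹ * y ^ 2 = P y := by field_simp
    rw [h4] at h3
    exact lt_trans (by positivity) h3
  have hQP : Tendsto (fun y => Q y / P y) atTop (nhds 0) := by
    have h1 : Tendsto (fun y => (Q y * y⁻¹) / (P y * (y ^ 2)⁻¹) * y⁻¹) atTop (nhds 0) := by
      have := (hQ1.div hP2 (inv_ne_zero hk.ne')).mul hinv
      simpa using this
    apply h1.congr'
    filter_upwards [eventually_gt_atTop 0, hPpos] with y hy hP
    field_simp [hy.ne', hP.ne']
  have hargB : Tendsto (fun y => Complex.arg (B y)) atTop (nhds 0) := by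
    apply squeeze_zero_norm' (a := fun y => Real.pi / 2 * |Q y / P y|)
    · filter_upwards [hPpos] with y hP
      rw [Real.norm_eq_abs]
      calc |Complex.arg (B y)| ≤ Real.pi / 2 * (|(B y).im| / (B y).re) := aux_arg_le hP
        _ = Real.pi / 2 * |Q y / P y| := by rw [abs_div, abs_of_pos hP]
    · have := ((_root_.continuous_abs.tendsto 0).comp hQP).const_mul (Real.pi / 2)
      simpa using this
  have hImL : Tendsto (fun y => (L y).im) atTop (nhds 0) := by
    apply hargB.congr
    intro y
    simp only [hL_def, Complex.log_im]
  have hwinv : Tendsto (fun y => (wC ω y)⁻¹) atTop (nhds 0) := by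
    apply squeeze_zero_norm' (a := fun y : ℝ => y⁻¹)
    · filter_upwards [eventually_gt_atTop 0] with y hy
      rw [norm_inv]
      apply inv_anti₀ hy
      calc y = (wC ω y).re := (wC_re ω y).symm
        _ ≤ ‖wC ω y‖ := Complex.re_le_norm _
        _ = ‖wC ω y‖ := rfl
    · exact hinv
  have hwne : ∀ y : ℝ, 0 < y → wC ω y ≠ 0 := by
    intro y hy h
    have h2 : (wC ω y).re = 0 := by rw [h]; simp
    rw [wC_re] at h2; linarith
  have hKne : ((2 * d₀ : ℝ) : ℂ) ^ 2 ≠ 0 := by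
    apply pow_ne_zero
    simpa using hc.ne'
  have hBc : Tendsto (fun y => B y * ((2 * d₀ : ℝ) : ℂ) ^ 2 / (wC ω y) ^ 2) atTop (nhds 1) := by
    have h1 : Tendsto (fun y => ((2 * d₀ : ℝ) : ℂ) ^ 2 * ((wC ω y)⁻¹ * (wC ω y)⁻¹)
        + (1 + e y * (wC ω y)⁻¹) * (1 + e y * (wC ω y)⁻¹)) atTop (nhds 1) := by
      have h2 := (tendsto_const_nhds (x := ((2 * d₀ : ℝ) : ℂ) ^ 2) (f := atTop)).mul
        (hwinv.mul hwinv)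
      have h3 := (tendsto_const_nhds (x := (1:ℂ)) (f := atTop)).add (he0.mul hwinv)
      have := h2.add (h3.mul h3)
      simpa using this
    apply h1.congr'
    filter_upwards [eventually_gt_atTop 0] with y hy
    have hwne' := hwne y hy
    have hd0ne : (d₀ : ℂ) ≠ 0 := by
      simpa using (show d₀ ≠ 0 by linarith)
    simp only [hB_def]
    field_simp
  have habsB : Tendsto (fun y => ‖B y‖ * (2 * d₀) ^ 2 / (‖wC ω y‖) ^ 2)
      atTop (nhds 1) := by
    have h1 := (continuous_norm.tendsto 1).comp hBc
    simp only [norm_one] at h1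
    apply h1.congr
    intro y
    simp only [Function.comp]
    rw [norm_div, norm_mul, norm_pow, norm_pow, Complex.norm_real, Real.norm_eq_abs, abs_of_pos hc]
  have habswsq : ∀ y : ℝ, (‖wC ω y‖) ^ 2 = y ^ 2 + ω ^ 2 := by
    intro y
    rw [Complex.sq_norm, Complex.normSq_apply, wC_re, wC_im]
    ring
  have hlog1 : Tendsto (fun y => Real.log (‖B y‖ * (2 * d₀) ^ 2
      / (‖wC ω y‖) ^ 2)) atTop (nhds 0) := by
    have := (Real.continuousAt_log one_ne_zero).tendsto.comp habsB
    simpa [Function.comp_def] using this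
  have hlogw : Tendsto (fun y => Real.log (y ^ 2 + ω ^ 2) - 2 * Real.log y) atTop (nhds 0) := by
    have h1 : Tendsto (fun y : ℝ => 1 + ω ^ 2 * (y⁻¹ * y⁻¹)) atTop (nhds 1) := by
      simpa using (tendsto_const_nhds (x := (1:ℝ))).add
        ((tendsto_const_nhds (x := ω ^ 2)).mul (hinv.mul hinv))
    have h2 := (Real.continuousAt_log one_ne_zero).tendsto.comp h1
    simp only [Function.comp, Real.log_one] at h2
    apply h2.congr'
    filter_upwards [eventually_gt_atTop 0] with y hy
    simp only [Function.comp_apply]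
    have hy2 : (0:ℝ) < y ^ 2 + ω ^ 2 := by positivity
    rw [show (1 + ω ^ 2 * (y⁻¹ * y⁻¹)) = (y ^ 2 + ω ^ 2) / y ^ 2 by field_simp]
    rw [Real.log_div hy2.ne' (by positivity), Real.log_pow]
    push_cast
    ring
  have hReL2 : Tendsto (fun y => (L y).re - 2 * Real.log y) atTop
      (nhds (-Real.log ((2 * d₀) ^ 2))) := by
    have h1 : Tendsto (fun y => (Real.log (‖B y‖ * (2 * d₀) ^ 2
        / (‖wC ω y‖) ^ 2) - Real.log ((2 * d₀) ^ 2))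
        + (Real.log (y ^ 2 + ω ^ 2) - 2 * Real.log y)) atTop
        (nhds (-Real.log ((2 * d₀) ^ 2))) := by
      have := (hlog1.sub (tendsto_const_nhds (x := Real.log ((2 * d₀) ^ 2)))).add hlogw
      simpa using this
    apply h1.congr'
    filter_upwards [hPpos, eventually_gt_atTop 0] with y hP hy
    have hBne : B y ≠ 0 := by
      intro h
      have hP' : (0:ℝ) < (B y).re := hP
      rw [h] at hP'
      simp at hP'
    have hBpos : 0 < ‖B y‖ := norm_pos_iff.mpr hBne
    have hwpos : 0 < ‖wC ω y‖ := norm_pos_iff.mpr (hwne y hy)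
    have hL_re : (L y).re = Real.log (‖B y‖) := Complex.log_re _
    rw [hL_re, Real.log_div (by positivity) (by positivity),
      Real.log_mul hBpos.ne' (by positivity), Real.log_pow, habswsq y]
    push_cast
    ring
  have h2l : Tendsto (fun y : ℝ => 2 * Real.log y) atTop atTop :=
    Real.tendsto_log_atTop.const_mul_atTop two_pos
  have hReLtop : Tendsto (fun y => (L y).re) atTop atTop := by
    have := hReL2.add_atTop h2l
    apply this.congr
    intro y
    ring
  have hReLpos : ∀ᶠ y in atTop, 0 < (L y).re := hReLtop.eventually_gt_atTop 0
  have hReLinv : Tendsto (fun y => ((L y).re)⁻¹) atTop (nhds 0) := hReLtop.inv_tendsto_atTop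
  have hRatioReL : Tendsto (fun y => (L y).re / (2 * Real.log y)) atTop (nhds 1) := by
    have h1 : Tendsto (fun y => 1 + ((L y).re - 2 * Real.log y) * (2 * Real.log y)⁻¹)
        atTop (nhds 1) := by
      simpa using (tendsto_const_nhds (x := (1:ℝ))).add (hReL2.mul h2l.inv_tendsto_atTop)
    apply h1.congr'
    filter_upwards [eventually_gt_atTop 1] with y hy
    have hlpos : 0 < Real.log y := Real.log_pos hy
    field_simp
    ring
  have habsL : Tendsto (fun y => ‖L y‖ / (2 * Real.log y)) atTop (nhds 1) := by
    have h1 : Tendsto (fun y => ((L y).re / (2 * Real.log y)) * ((L y).re / (2 * Real.log y))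
        + ((L y).im * (2 * Real.log y)⁻¹) * ((L y).im * (2 * Real.log y)⁻¹)) atTop (nhds 1) := by
      have h2 := (hRatioReL.mul hRatioReL).add
        ((hImL.mul h2l.inv_tendsto_atTop).mul (hImL.mul h2l.inv_tendsto_atTop))
      simpa using h2
    have hsq := (Real.continuous_sqrt.tendsto 1).comp h1
    simp only [Function.comp_def, Real.sqrt_one] at hsq
    apply hsq.congr'
    filter_upwards [eventually_gt_atTop 1] with y hy
    have hD : 0 < 2 * Real.log y := by have := Real.log_pos hy; linarith
    rw [show ((L y).re / (2 * Real.log y)) * ((L y).re / (2 * Real.log y))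
        + ((L y).im * (2 * Real.log y)⁻¹) * ((L y).im * (2 * Real.log y)⁻¹)
        = ((L y).re ^ 2 + (L y).im ^ 2) / (2 * Real.log y) ^ 2 by ring]
    rw [Real.sqrt_div (add_nonneg (sq_nonneg _) (sq_nonneg _)) ((2 * Real.log y) ^ 2),
      Real.sqrt_sq hD.le]
    congr 1
    rw [Complex.norm_def, Complex.normSq_apply]
    congr 1
    ring
  have hargL : Tendsto (fun y => Complex.arg (L y)) atTop (nhds 0) := by
    apply squeeze_zero_norm' (a := fun y => Real.pi / 2 * (|(L y).im| * ((L y).re)⁻¹))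
    · filter_upwards [hReLpos] with y hR
      rw [Real.norm_eq_abs]
      calc |Complex.arg (L y)| ≤ Real.pi / 2 * (|(L y).im| / (L y).re) := aux_arg_le hR
        _ = Real.pi / 2 * (|(L y).im| * ((L y).re)⁻¹) := by ring
    · have := (((_root_.continuous_abs.tendsto 0).comp hImL).mul hReLinv).const_mul (Real.pi / 2)
      simpa using this
  have hupos : ∀ᶠ y in atTop, 0 < u y := by
    have h1 : ∀ᶠ y in atTop, (1:ℝ)/2 < u y * y⁻¹ :=
      ha.eventually (eventually_gt_nhds (by norm_num))
    filter_upwards [h1, eventually_gt_atTop 0] with y h2 hy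
    by_contra h
    push_neg at h
    have h3 := mul_nonpos_of_nonpos_of_nonneg h (inv_nonneg.2 hy.le)
    linarith
  have hyQP : Tendsto (fun y => (Q y * y⁻¹) / (P y * (y ^ 2)⁻¹)) atTop
      (nhds ((2 * ω / k) / k⁻¹)) := hQ1.div hP2 (inv_ne_zero hk.ne')
  have hW : Tendsto (fun y => u y * (Q y / P y) * ((L y).re)⁻¹) atTop (nhds 0) := by
    have h1 : Tendsto (fun y => (u y * y⁻¹ * ((Q y * y⁻¹) / (P y * (y ^ 2)⁻¹)))
        * ((L y).re)⁻¹) atTop (nhds 0) := by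
      simpa using (ha.mul hyQP).mul hReLinv
    apply h1.congr'
    filter_upwards [eventually_gt_atTop 0, hPpos] with y hy hP
    have h2 : u y * y⁻¹ * ((Q y * y⁻¹) / (P y * (y ^ 2)⁻¹)) = u y * (Q y / P y) := by
      field_simp
    rw [h2]
  have husin : Tendsto (fun y => u y * Real.sin (m * Complex.arg (L y))) atTop (nhds 0) := by
    apply squeeze_zero_norm'
      (a := fun y => m * (Real.pi / 2) ^ 2 * |u y * (Q y / P y) * ((L y).re)⁻¹|)
    · filter_upwards [hupos, hPpos, hReLpos] with y hu hP hR
      rw [Real.norm_eq_abs, abs_mul]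
      have hImLle : |(L y).im| ≤ Real.pi / 2 * (|Q y| / P y) := by
        have h3 : (L y).im = Complex.arg (B y) := Complex.log_im _
        rw [h3]
        exact aux_arg_le hP
      have hsin : |Real.sin (m * Complex.arg (L y))| ≤ m * |Complex.arg (L y)| := by
        calc |Real.sin (m * Complex.arg (L y))| ≤ |m * Complex.arg (L y)| :=
              Real.abs_sin_le_abs
          _ = m * |Complex.arg (L y)| := by rw [abs_mul, abs_of_pos hmpos]
      calc |u y| * |Real.sin (m * Complex.arg (L y))|
          ≤ |u y| * (m * |Complex.arg (L y)|) := by gcongr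
        _ ≤ |u y| * (m * (Real.pi / 2 * (|(L y).im| / (L y).re))) := by
            gcongr
            exact aux_arg_le hR
        _ ≤ |u y| * (m * (Real.pi / 2 * ((Real.pi / 2 * (|Q y| / P y)) / (L y).re))) := by
            gcongr
        _ = m * (Real.pi / 2) ^ 2 * |u y * (Q y / P y) * ((L y).re)⁻¹| := by
            rw [abs_mul, abs_mul, abs_div, abs_inv, abs_of_pos hP, abs_of_pos hR]
            ring
    · have h0 := ((_root_.continuous_abs.tendsto 0).comp hW).const_mul (m * (Real.pi / 2) ^ 2)
      simpa using h0
  have hvcos : Tendsto (fun y => v y * Real.cos (m * Complex.arg (L y))) atTop (nhds ω) := by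
    have h1 : Tendsto (fun y => m * Complex.arg (L y)) atTop (nhds 0) := by
      simpa using hargL.const_mul m
    have h2 := (Real.continuous_cos.tendsto 0).comp h1
    simp only [Function.comp_def, Real.cos_zero] at h2
    simpa using hb.mul h2
  have hrpow : Tendsto (fun y => (‖L y‖) ^ m / (2 * Real.log y) ^ m)
      atTop (nhds 1) := by
    have h1 := ((Real.continuousAt_rpow_const 1 m (Or.inl one_ne_zero)).tendsto).comp habsL
    simp only [Function.comp_def, Real.one_rpow] at h1
    apply h1.congr'
    filter_upwards [eventually_gt_atTop 1] with y hy
    have hD : (0:ℝ) < 2 * Real.log y := by have := Real.log_pos hy; linarith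
    rw [Real.div_rpow (norm_nonneg _) hD.le]
  have hLm : ∀ y : ℝ, 0 < (L y).re →
      ((L y) ^ (m:ℂ)).re = (‖L y‖) ^ m * Real.cos (m * Complex.arg (L y)) ∧
      ((L y) ^ (m:ℂ)).im = (‖L y‖) ^ m * Real.sin (m * Complex.arg (L y)) := by
    intro y hR
    have hLne : L y ≠ 0 := by
      intro h
      rw [h] at hR
      simp at hR
    have habs : 0 < ‖L y‖ := norm_pos_iff.mpr hLne
    have hre : (Complex.log (L y) * (m:ℂ)).re = Real.log (‖L y‖) * m := by
      simp [Complex.mul_re, Complex.log_re]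
    have him : (Complex.log (L y) * (m:ℂ)).im = Complex.arg (L y) * m := by
      simp [Complex.mul_im, Complex.log_im]
    rw [Complex.cpow_def_of_ne_zero hLne]
    constructor
    · rw [Complex.exp_re, hre, him, Real.rpow_def_of_pos habs, mul_comm (Complex.arg (L y)) m]
    · rw [Complex.exp_im, hre, him, Real.rpow_def_of_pos habs, mul_comm (Complex.arg (L y)) m]
  have hFform : ∀ y : ℝ, 0 < (L y).re →
      (-Complex.I * (x' : ℂ) * xi3 d₀ m ((y : ℂ) + Complex.I * (ω : ℂ))).re
      = x' * ((‖L y‖) ^ m * (u y * Real.sin (m * Complex.arg (L y))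
          + v y * Real.cos (m * Complex.arg (L y)))) := by
    intro y hR
    rw [hxi y]
    obtain ⟨h1, h2⟩ := hLm y hR
    have h3 : (-Complex.I * (x' : ℂ) * ((wC ω y + e y) * (L y) ^ (m:ℂ))).re
        = x' * ((wC ω y + e y).re * ((L y) ^ (m:ℂ)).im
            + (wC ω y + e y).im * ((L y) ^ (m:ℂ)).re) := by
      simp [Complex.mul_re, Complex.mul_im]
    rw [h3, hwre, hwim, h1, h2]
    ring
  have hDpos : ∀ y : ℝ, 1 < y → (0:ℝ) < (2 * Real.log y) ^ m := by
    intro y hy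
    exact Real.rpow_pos_of_pos (by have := Real.log_pos hy; linarith) m
  have hpart2 : Tendsto (fun y : ℝ =>
      (-Complex.I * (x' : ℂ) * xi3 d₀ m ((y : ℂ) + Complex.I * (ω : ℂ))).re /
        (x' * ω * (2 * Real.log y) ^ m)) atTop (nhds 1) := by
    have h1 : Tendsto (fun y => ((‖L y‖) ^ m / (2 * Real.log y) ^ m)
        * ((u y * Real.sin (m * Complex.arg (L y))
            + v y * Real.cos (m * Complex.arg (L y))) / ω)) atTop (nhds 1) := by
      have h2 := hrpow.mul ((husin.add hvcos).div_const ω)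
      simpa [div_self hωne] using h2
    apply h1.congr'
    filter_upwards [eventually_gt_atTop 1, hReLpos] with y hy hR
    rw [hFform y hR]
    have hD := hDpos y hy
    field_simp
  refine ⟨?_, hpart2⟩
  have hDtop : Tendsto (fun y : ℝ => x' * ω * (2 * Real.log y) ^ m) atTop atBot := by
    have h1 : Tendsto (fun y : ℝ => (2 * Real.log y) ^ m) atTop atTop :=
      (tendsto_rpow_atTop hmpos).comp h2l
    exact Tendsto.const_mul_atTop_of_neg hxω h1
  have h2 := Filter.Tendsto.pos_mul_atBot one_pos hpart2 hDtop
  apply h2.congr'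
  filter_upwards [eventually_gt_atTop 1] with y hy
  have hD := hDpos y hy
  have hDne : x' * ω * (2 * Real.log y) ^ m ≠ 0 :=
    mul_ne_zero (mul_ne_zero hx'ne hωne) hD.ne'
  rw [div_mul_cancel₀ _ hDne]
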